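/- Let (T,s) be a parking function on a rooted tree T. An edge e = (u,v) (from u to its parent v) is used by s — i.e., some driver crosses e after failing to park at her preferred spot — if and only if |T_u| < |{i : s_i ∈ T_u}|. Consequently, the set of used edges is invariant under permutations of s. -/

import Mathlib

/-! Rooted trees on vertex set `Fin n`, edges oriented towards the root: encoded by
the root and the parent function (`parent v` is the endpoint of the unique outgoing
edge of a non-root vertex `v`; the root is a fixed point). Tree-ness is the condition
that every vertex reaches the root by iterating `parent` (fewer than `n` steps
always suffice). -/

/-- `(root, parent)` encodes a rooted tree on `Fin n` with edges oriented toward the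
root. -/
def IsRootedTree {n : ℕ} (root : Fin n) (parent : Fin n → Fin n) : Prop :=
  parent root = root ∧ ∀ v, ∃ k ∈ Finset.range n, parent^[k] v = root

/-- `T_v`: the set of vertices `u` with a directed path from `u` to `v`
(including `v` itself). -/
def subtree {n : ℕ} (parent : Fin n → Fin n) (v : Fin n) : Finset (Fin n) :=
  Finset.univ.filter fun u => ∃ k ∈ Finset.range n, parent^[k] u = v

/-- The directed path from `v` towards the root: `v, parent v, parent² v, …`. -/
def pathToRoot {n : ℕ} (parent : Fin n → Fin n) (v : Fin n) : List (Fin n) :=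
  (List.range n).map fun k => parent^[k] v

/-- The spot where a driver preferring `v` parks, given the set `occ` of occupied
vertices: the first unoccupied vertex on the path from `v` to the root (`none` if
there is no such vertex, i.e. the driver leaves without parking). -/
def parkSpot {n : ℕ} (parent : Fin n → Fin n) (occ : Finset (Fin n)) (v : Fin n) :
    Option (Fin n) :=
  (pathToRoot parent v).find? fun u => decide (u ∉ occ)

/-- The effect of one driver (preferring `v`) parking on the occupied set. -/
def treeStep {n : ℕ} (parent : Fin n → Fin n) (occ : Finset (Fin n)) (v : Fin n) :
    Finset (Fin n) :=
  match parkSpot parent occ v with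
  | some u => insert u occ
  | none => occ

/-- The set of occupied vertices after the first `m` drivers (with preference
sequence `s`) have attempted to park, in order. -/
def occAfter {n : ℕ} (parent : Fin n → Fin n) (s : Fin n → Fin n) (m : ℕ) :
    Finset (Fin n) :=
  ((List.ofFn s).take m).foldl (treeStep parent) ∅

/-- `s` is a parking function on the rooted tree `(root, parent)`: all `n` drivers
successfully park. -/
def IsTreePF {n : ℕ} (parent : Fin n → Fin n) (s : Fin n → Fin n) : Prop :=
  occAfter parent s n = Finset.univ

/-- `s` is a prime parking function on `(root, parent)`: it is a parking function and
for every non-root vertex `v`, `|T_v| < |{i : s_i ∈ T_v}|`. -/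
def IsPrimeTreePF {n : ℕ} (root : Fin n) (parent : Fin n → Fin n)
    (s : Fin n → Fin n) : Prop :=
  IsTreePF parent s ∧ ∀ v, v ≠ root →
    (subtree parent v).card < (Finset.univ.filter fun i => s i ∈ subtree parent v).card

/-- The edge `(u, parent u)` (for non-root `u`) is *used* by `s`: some driver `i`,
after failing to park at her preferred spot `s i`, crosses it, i.e. every vertex on
the path from `s i` up to and including `u` is occupied when she drives. -/
def UsedEdge {n : ℕ} (root : Fin n) (parent : Fin n → Fin n) (s : Fin n → Fin n)
    (u : Fin n) : Prop :=
  u ≠ root ∧ ∃ i : Fin n, ∃ k, parent^[k] (s i) = u ∧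
    ∀ j ≤ k, parent^[j] (s i) ∈ occAfter parent s i

set_option linter.unusedSectionVars false

namespace TreePF

variable {n : ℕ} {root : Fin n} {parent : Fin n → Fin n} {s : Fin n → Fin n}

/-- `Reach a b`: `b` is on the path from `a` to the root. -/
def Reach (parent : Fin n → Fin n) (a b : Fin n) : Prop := ∃ k, parent^[k] a = b

lemma reach_refl (a : Fin n) : Reach parent a a := ⟨0, rfl⟩

lemma reach_trans {a b c : Fin n} (h1 : Reach parent a b) (h2 : Reach parent b c) :
    Reach parent a c := by
  obtain ⟨k1, rfl⟩ := h1; obtain ⟨k2, rfl⟩ := h2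
  exact ⟨k2 + k1, (Function.iterate_add_apply _ _ _ _)⟩

lemma reach_total {a b c : Fin n} (h1 : Reach parent a b) (h2 : Reach parent a c) :
    Reach parent b c ∨ Reach parent c b := by
  obtain ⟨k1, rfl⟩ := h1; obtain ⟨k2, rfl⟩ := h2
  rcases le_total k1 k2 with h | h
  · exact Or.inl ⟨k2 - k1, by rw [← Function.iterate_add_apply, Nat.sub_add_cancel h]⟩
  · exact Or.inr ⟨k1 - k2, by rw [← Function.iterate_add_apply, Nat.sub_add_cancel h]⟩

variable (hT : IsRootedTree root parent)
include hT

lemma reach_bound {a b : Fin n} (h : Reach parent a b) : ∃ k < n, parent^[k] a = b := by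
  obtain ⟨k, hk⟩ := h
  obtain ⟨k0, hk0, hk0'⟩ := hT.2 a
  rw [Finset.mem_range] at hk0
  rcases lt_or_ge k k0 with h' | h'
  · exact ⟨k, h'.trans hk0, hk⟩
  · have : b = root := by
      rw [← hk, ← Nat.sub_add_cancel h', Function.iterate_add_apply, hk0',
        Function.iterate_fixed hT.1]
    exact ⟨k0, hk0, by rw [hk0', this]⟩

lemma reach_antisymm {a b : Fin n} (h1 : Reach parent a b) (h2 : Reach parent b a) : a = b := by
  obtain ⟨k1, hk1⟩ := h1; obtain ⟨k2, hk2⟩ := h2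
  rcases Nat.eq_zero_or_pos k1 with h | h
  · subst h; exact hk1.symm ▸ rfl
  · -- a has period p := k2 + k1 ≥ 1, hence a = root, hence b = root
    have hp : parent^[k2 + k1] a = a := by
      rw [Function.iterate_add_apply, hk1, hk2]
    obtain ⟨k0, hk0, hk0'⟩ := hT.2 a
    have hper : ∀ t, parent^[(k2 + k1) * t] a = a := by
      intro t
      rw [Function.iterate_mul]
      exact Function.iterate_fixed hp t
    have hbig : (k2 + k1) * (k0 + 1) ≥ k0 := by nlinarith
    have : a = root := by
      have := hper (k0 + 1)
      rw [← Nat.sub_add_cancel hbig, Function.iterate_add_apply, hk0',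
        Function.iterate_fixed hT.1] at this
      exact this.symm
    subst this
    rw [← hk1, Function.iterate_fixed hT.1]

lemma mem_subtree_iff {a b : Fin n} : a ∈ subtree parent b ↔ Reach parent a b := by
  simp only [subtree, Finset.mem_filter, Finset.mem_univ, true_and, Finset.mem_range]
  constructor
  · rintro ⟨k, _, hk⟩; exact ⟨k, hk⟩
  · intro h; obtain ⟨k, hk, hk'⟩ := reach_bound hT h; exact ⟨k, hk, hk'⟩

lemma mem_pathToRoot {v z : Fin n} : z ∈ pathToRoot parent v ↔ Reach parent v z := by
  simp only [pathToRoot, List.mem_map, List.mem_range]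
  constructor
  · rintro ⟨k, _, hk⟩; exact ⟨k, hk⟩
  · intro h; obtain ⟨k, hk, hk'⟩ := reach_bound hT h; exact ⟨k, hk, hk'⟩

lemma parkSpot_eq_none_iff {occ : Finset (Fin n)} {v : Fin n} :
    parkSpot parent occ v = none ↔ ∀ z, Reach parent v z → z ∈ occ := by
  unfold parkSpot
  rw [List.find?_eq_none]
  constructor
  · intro h z hz
    have := h z ((mem_pathToRoot hT).2 hz)
    simpa using this
  · intro h z hz
    simpa using h z ((mem_pathToRoot hT).1 hz)

lemma parkSpot_eq_some_iff {occ : Finset (Fin n)} {v w : Fin n} :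
    parkSpot parent occ v = some w ↔
      w ∉ occ ∧ Reach parent v w ∧
        ∀ z, Reach parent v z → Reach parent z w → z ≠ w → z ∈ occ := by
  unfold parkSpot
  rw [List.find?_eq_some_iff_getElem]
  have hlen : (pathToRoot parent v).length = n := by simp [pathToRoot]
  constructor
  · rintro ⟨hw, i, hi, hiw, hmin⟩
    rw [hlen] at hi
    have hiw' : parent^[i] v = w := by
      simpa [pathToRoot] using hiw
    have hocc : ∀ j < i, parent^[j] v ∈ occ := by
      intro j hj
      have := hmin j hj
      simp only [pathToRoot, List.getElem_map, List.getElem_range] at this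
      simpa using this
    refine ⟨by simpa using hw, ⟨i, hiw'⟩, ?_⟩
    rintro z ⟨m, rfl⟩ hzw hzne
    rcases lt_or_ge m i with h | h
    · exact hocc m h
    · exfalso
      apply hzne
      refine reach_antisymm hT hzw ⟨m - i, ?_⟩
      rw [← hiw', ← Function.iterate_add_apply, Nat.sub_add_cancel h]
  · rintro ⟨hw, hr, hmin⟩
    have hex : ∃ k, parent^[k] v = w := hr
    set j := Nat.find hex with hj
    have hjw : parent^[j] v = w := Nat.find_spec hex
    have hjn : j < n := by
      obtain ⟨k, hk, hk'⟩ := reach_bound hT hr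
      exact lt_of_le_of_lt (Nat.find_le hk') hk
    refine ⟨by simpa using hw, j, by rwa [hlen], ?_, ?_⟩
    · simp [pathToRoot, hjw]
    · intro j' hj'
      have hne : parent^[j'] v ≠ w := fun h => Nat.find_min hex hj' h
      have : parent^[j'] v ∈ occ := by
        refine hmin _ ⟨j', rfl⟩ ⟨j - j', ?_⟩ hne
        rw [← Function.iterate_add_apply, Nat.sub_add_cancel hj'.le, hjw]
      simp only [pathToRoot, List.getElem_map, List.getElem_range]
      simpa using this


include hT

lemma treeStep_of_none {occ : Finset (Fin n)} {v : Fin n} (h : parkSpot parent occ v = none) :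
    treeStep parent occ v = occ := by simp [treeStep, h]

lemma treeStep_of_some {occ : Finset (Fin n)} {v w : Fin n} (h : parkSpot parent occ v = some w) :
    treeStep parent occ v = insert w occ := by simp [treeStep, h]

lemma parkSpot_insert_some {occ : Finset (Fin n)} {a b x w : Fin n}
    (ha : parkSpot parent occ a = some x) (hb : parkSpot parent occ b = some x)
    (hw : parkSpot parent (insert x occ) a = some w) :
    parkSpot parent (insert x occ) b = some w := by
  obtain ⟨hxocc, hax, hamin⟩ := (parkSpot_eq_some_iff hT).1 ha
  obtain ⟨-, hbx, hbmin⟩ := (parkSpot_eq_some_iff hT).1 hb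
  obtain ⟨hwocc, haw, hwmin⟩ := (parkSpot_eq_some_iff hT).1 hw
  have hwx : w ≠ x := fun h => hwocc (h ▸ Finset.mem_insert_self x occ)
  have hxw : Reach parent x w := by
    rcases reach_total haw hax with h | h
    · exfalso
      exact hwocc (Finset.mem_insert_of_mem (hamin w haw h hwx))
    · exact h
  refine (parkSpot_eq_some_iff hT).2 ⟨hwocc, reach_trans hbx hxw, ?_⟩
  intro z hbz hzw hzne
  rcases reach_total hbz hbx with h | h
  · by_cases hzx : z = x
    · exact hzx ▸ Finset.mem_insert_self x occ
    · exact Finset.mem_insert_of_mem (hbmin z hbz h hzx)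
  · exact hwmin z (reach_trans hax h) hzw hzne

lemma parkSpot_insert_eq {occ : Finset (Fin n)} {a b x : Fin n}
    (ha : parkSpot parent occ a = some x) (hb : parkSpot parent occ b = some x) :
    parkSpot parent (insert x occ) a = parkSpot parent (insert x occ) b := by
  cases h : parkSpot parent (insert x occ) a with
  | some w => exact (parkSpot_insert_some hT ha hb h).symm
  | none =>
    cases h2 : parkSpot parent (insert x occ) b with
    | none => rfl
    | some w =>
      have := parkSpot_insert_some hT hb ha h2
      rw [h] at this
      exact absurd this (by simp)

lemma treeStep_comm (occ : Finset (Fin n)) (a b : Fin n) :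
    treeStep parent (treeStep parent occ a) b = treeStep parent (treeStep parent occ b) a := by
  cases ha : parkSpot parent occ a with
  | none =>
    rw [treeStep_of_none hT ha]
    cases hb : parkSpot parent occ b with
    | none => rw [treeStep_of_none hT hb, treeStep_of_none hT ha]
    | some y =>
      rw [treeStep_of_some hT hb]
      have : parkSpot parent (insert y occ) a = none := by
        refine (parkSpot_eq_none_iff hT).2 fun z hz => Finset.mem_insert_of_mem ?_
        exact (parkSpot_eq_none_iff hT).1 ha z hz
      rw [treeStep_of_none hT this]
  | some x =>
    rw [treeStep_of_some hT ha]
    cases hb : parkSpot parent occ b with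
    | none =>
      rw [treeStep_of_none hT hb, treeStep_of_some hT ha]
      have : parkSpot parent (insert x occ) b = none := by
        refine (parkSpot_eq_none_iff hT).2 fun z hz => Finset.mem_insert_of_mem ?_
        exact (parkSpot_eq_none_iff hT).1 hb z hz
      rw [treeStep_of_none hT this]
    | some y =>
      rw [treeStep_of_some hT hb]
      by_cases hxy : x = y
      · subst hxy
        have heq := parkSpot_insert_eq hT ha hb
        cases h : parkSpot parent (insert x occ) a with
        | none =>
          rw [treeStep_of_none hT h, treeStep_of_none hT (heq ▸ h)]
        | some w =>
          rw [treeStep_of_some hT h, treeStep_of_some hT (heq ▸ h)]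
      · obtain ⟨hyocc, hby, hbmin⟩ := (parkSpot_eq_some_iff hT).1 hb
        obtain ⟨hxocc, hax, hamin⟩ := (parkSpot_eq_some_iff hT).1 ha
        have h1 : parkSpot parent (insert x occ) b = some y := by
          refine (parkSpot_eq_some_iff hT).2 ⟨?_, hby, ?_⟩
          · simp [hyocc, Ne.symm hxy]
          · exact fun z h1 h2 h3 => Finset.mem_insert_of_mem (hbmin z h1 h2 h3)
        have h2 : parkSpot parent (insert y occ) a = some x := by
          refine (parkSpot_eq_some_iff hT).2 ⟨?_, hax, ?_⟩
          · simp [hxocc, hxy]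
          · exact fun z hh1 hh2 hh3 => Finset.mem_insert_of_mem (hamin z hh1 hh2 hh3)
        rw [treeStep_of_some hT h1, treeStep_of_some hT h2, Finset.insert_comm]


omit hT
lemma occAfter_zero : occAfter parent s 0 = ∅ := by simp [occAfter]

lemma occAfter_succ (m : ℕ) (hm : m < n) :
    occAfter parent s (m + 1) = treeStep parent (occAfter parent s m) (s ⟨m, hm⟩) := by
  unfold occAfter
  rw [List.take_succ, List.getElem?_eq_getElem (by simpa using hm), List.foldl_append]
  simp [List.getElem_ofFn]

lemma occAfter_subset_succ (m : ℕ) : occAfter parent s m ⊆ occAfter parent s (m + 1) := by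
  unfold occAfter
  rw [List.take_succ, List.foldl_append]
  cases h : (List.ofFn s)[m]? with
  | none => simp
  | some a =>
    simp only [Option.toList_some, List.foldl_cons, List.foldl_nil]
    unfold treeStep
    split
    · exact Finset.subset_insert _ _
    · exact subset_rfl

lemma occAfter_mono {m m' : ℕ} (h : m ≤ m') : occAfter parent s m ⊆ occAfter parent s m' := by
  induction m' with
  | zero => simpa [Nat.le_zero.1 h]
  | succ k ih =>
    rcases Nat.lt_or_ge m (k + 1) with h' | h'
    · exact (ih (Nat.lt_succ_iff.1 h')).trans (occAfter_subset_succ k)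
    · rw [show m = k + 1 from le_antisymm h h']

lemma card_occAfter_succ_le (m : ℕ) :
    (occAfter parent s (m + 1)).card ≤ (occAfter parent s m).card + 1 := by
  unfold occAfter
  rw [List.take_succ, List.foldl_append]
  cases h : (List.ofFn s)[m]? with
  | none => simp
  | some a =>
    simp only [Option.toList_some, List.foldl_cons, List.foldl_nil]
    unfold treeStep
    split
    · exact Finset.card_insert_le _ _
    · exact Nat.le_succ _

lemma card_occAfter_le (m : ℕ) : (occAfter parent s m).card ≤ m := by
  induction m with
  | zero => simp [occAfter_zero]
  | succ k ih => exact (card_occAfter_succ_le k).trans (Nat.succ_le_succ ih)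

lemma card_occAfter_add_le (m k : ℕ) :
    (occAfter parent s (m + k)).card ≤ (occAfter parent s m).card + k := by
  induction k with
  | zero => simp
  | succ k ih => exact (card_occAfter_succ_le (m + k)).trans (Nat.succ_le_succ ih)

variable (hs : IsTreePF parent s)
include hs

lemma card_occAfter_eq {m : ℕ} (hm : m ≤ n) : (occAfter parent s m).card = m := by
  refine le_antisymm (card_occAfter_le m) ?_
  have h1 : (occAfter parent s n).card = n := by rw [hs]; simp
  have h2 := card_occAfter_add_le (parent := parent) (s := s) m (n - m)
  rw [Nat.add_sub_cancel' hm, h1] at h2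
  omega

lemma spot_exists (i : Fin n) :
    ∃ w, parkSpot parent (occAfter parent s i) (s i) = some w ∧
      occAfter parent s (i + 1) = insert w (occAfter parent s i) ∧
      w ∉ occAfter parent s i := by
  have hstep : occAfter parent s (↑i + 1) = treeStep parent (occAfter parent s ↑i) (s i) := by
    have := occAfter_succ (parent := parent) (s := s) i.1 i.isLt
    simpa using this
  have hc1 : (occAfter parent s ↑i).card = ↑i := card_occAfter_eq hs i.isLt.le
  have hc2 : (occAfter parent s (↑i + 1)).card = ↑i + 1 := card_occAfter_eq hs i.isLt
  cases h : parkSpot parent (occAfter parent s ↑i) (s i) with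
  | none =>
    exfalso
    have heq : treeStep parent (occAfter parent s ↑i) (s i) = occAfter parent s ↑i := by
      simp [treeStep, h]
    rw [hstep, heq, hc1] at hc2
    omega
  | some w =>
    have hins : occAfter parent s (↑i + 1) = insert w (occAfter parent s ↑i) := by
      rw [hstep]; simp [treeStep, h]
    refine ⟨w, rfl, hins, fun hmem => ?_⟩
    rw [hins, Finset.insert_eq_self.2 hmem, hc1] at hc2
    omega

/-- every vertex is somebody's parking spot -/
lemma exists_parker (w : Fin n) :
    ∃ i : Fin n, parkSpot parent (occAfter parent s ↑i) (s i) = some w := by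
  have hP : w ∈ occAfter parent s n := by rw [hs]; exact Finset.mem_univ w
  have hex : ∃ m, w ∈ occAfter parent s m := ⟨n, hP⟩
  set m0 := Nat.find hex with hm0
  have hspec : w ∈ occAfter parent s m0 := Nat.find_spec hex
  have hm0n : m0 ≤ n := Nat.find_le hP
  have hm0pos : 0 < m0 := by
    rcases Nat.eq_zero_or_pos m0 with h | h
    · rw [h, occAfter_zero] at hspec; simp at hspec
    · exact h
  have hnotmem : w ∉ occAfter parent s (m0 - 1) := Nat.find_min hex (by omega)
  have hi : m0 - 1 < n := by omega
  obtain ⟨w', hw', hins, hwnot⟩ := spot_exists hs ⟨m0 - 1, hi⟩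
  have : w ∈ insert w' (occAfter parent s (m0 - 1)) := by
    rw [← hins]
    simp only []
    have : (m0 - 1) + 1 = m0 := by omega
    rw [this]  -- coercion issue maybe
    exact hspec
  rcases Finset.mem_insert.1 this with h | h
  · exact ⟨⟨m0 - 1, hi⟩, h ▸ hw'⟩
  · exact absurd h hnotmem

lemma parker_unique {i i' : Fin n} {w : Fin n}
    (h : parkSpot parent (occAfter parent s ↑i) (s i) = some w)
    (h' : parkSpot parent (occAfter parent s ↑i') (s i') = some w) : i = i' := by
  have key : ∀ j j' : Fin n, (j : ℕ) < j' →
      parkSpot parent (occAfter parent s ↑j) (s j) = some w →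
      parkSpot parent (occAfter parent s ↑j') (s j') = some w → False := by
    intro j j' hlt hj hj'
    obtain ⟨w1, hw1, hins, -⟩ := spot_exists hs j
    rw [hj] at hw1
    cases hw1
    have hmem : w ∈ occAfter parent s (↑j + 1) := by
      rw [hins]; exact Finset.mem_insert_self _ _
    have hmem' : w ∈ occAfter parent s ↑j' := occAfter_mono (by omega) hmem
    have := List.find?_some hj'
    simp at this
    exact this hmem'
  rcases lt_trichotomy (i : ℕ) (i' : ℕ) with h1 | h1 | h1
  · exact (key i i' h1 h h').elim
  · exact Fin.ext h1
  · exact (key i' i h1 h' h).elim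


omit hs

lemma usedEdge_iff (hT : IsRootedTree root parent) (hs : IsTreePF parent s)
    (u : Fin n) (hu : u ≠ root) :
    UsedEdge root parent s u ↔
      (subtree parent u).card <
        (Finset.univ.filter fun i => s i ∈ subtree parent u).card := by
  classical
  set T := subtree parent u with hT'
  set F := Finset.univ.filter fun j => s j ∈ subtree parent u with hF
  constructor
  · rintro ⟨-, i, k, hk, hocc⟩
    have hsiu : Reach parent (s i) u := ⟨k, hk⟩
    have hblock : ∀ z, Reach parent (s i) z → Reach parent z u →
        z ∈ occAfter parent s ↑i := by
      rintro z ⟨m, rfl⟩ hzu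
      rcases le_or_gt m k with h | h
      · exact hocc m h
      · have heq : parent^[m] (s i) = parent^[m - k] u := by
          rw [← hk, ← Function.iterate_add_apply, Nat.sub_add_cancel h.le]
        have hz : Reach parent u (parent^[m] (s i)) := ⟨m - k, heq.symm⟩
        rw [reach_antisymm hT hzu hz]
        exact hk ▸ hocc k le_rfl
    obtain ⟨w, hw, -, -⟩ := spot_exists hs i
    obtain ⟨hwocc, hsw, -⟩ := (parkSpot_eq_some_iff hT).1 hw
    have hwT : ¬ Reach parent w u := fun h => hwocc (hblock w hsw h)
    set g : Fin n → Fin n := fun w' => Classical.choose (exists_parker hs w') with hg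
    have hgspec : ∀ w', parkSpot parent (occAfter parent s ↑(g w')) (s (g w')) = some w' :=
      fun w' => Classical.choose_spec (exists_parker hs w')
    have hcard : T.card ≤ (F.erase i).card := by
      apply Finset.card_le_card_of_injOn g
      · intro w' hw'
        have hreach := ((parkSpot_eq_some_iff hT).1 (hgspec w')).2.1
        have hw'u : Reach parent w' u := (mem_subtree_iff hT).1 hw'
        refine Finset.mem_erase.2 ⟨fun heq => ?_, ?_⟩
        · have h2 := hgspec w'
          rw [heq, hw] at h2
          obtain rfl := Option.some.inj h2
          exact hwT hw'u
        · simp only [hF, Finset.mem_filter, Finset.mem_univ, true_and]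
          exact (mem_subtree_iff hT).2 (reach_trans hreach hw'u)
      · intro w1 _ w2 _ heq
        have h2 := hgspec w1
        rw [heq, hgspec w2] at h2
        exact (Option.some.inj h2).symm
    have hiF : i ∈ F := by
      simp only [hF, Finset.mem_filter, Finset.mem_univ, true_and]
      exact (mem_subtree_iff hT).2 hsiu
    have hFpos : 0 < F.card := Finset.card_pos.2 ⟨i, hiF⟩
    rw [Finset.card_erase_of_mem hiF] at hcard
    omega
  · intro hlt
    by_contra hnot
    rw [UsedEdge] at hnot
    push_neg at hnot
    have hnot' := hnot hu
    set g : Fin n → Fin n := fun i => Classical.choose (spot_exists hs i) with hg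
    have hgspec : ∀ i : Fin n, parkSpot parent (occAfter parent s ↑i) (s i) = some (g i) :=
      fun i => (Classical.choose_spec (spot_exists hs i)).1
    have hcard : F.card ≤ T.card := by
      apply Finset.card_le_card_of_injOn g
      · intro i hiF
        have hsiu : Reach parent (s i) u := (mem_subtree_iff hT).1 (by
          simpa only [hF, Finset.mem_coe, Finset.mem_filter, Finset.mem_univ, true_and] using hiF)
        obtain ⟨hwocc, hsw, hmin⟩ := (parkSpot_eq_some_iff hT).1 (hgspec i)
        rw [hT', Finset.mem_coe, mem_subtree_iff hT]
        rcases reach_total hsw hsiu with h | h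
        · exact h
        · by_cases huw : u = g i
          · exact huw ▸ reach_refl u
          · exfalso
            obtain ⟨k, hkn, hk⟩ := reach_bound hT hsiu
            obtain ⟨j, hj, hjocc⟩ := hnot' i k hk
            apply hjocc
            have hzu : Reach parent (parent^[j] (s i)) u :=
              ⟨k - j, by rw [← Function.iterate_add_apply, Nat.sub_add_cancel hj, hk]⟩
            refine hmin _ ⟨j, rfl⟩ (reach_trans hzu h) fun hzw => ?_
            exact huw ((reach_antisymm hT hzu (hzw ▸ h)).symm ▸ (hzw ▸ rfl))
      · intro i1 _ i2 _ heq
        exact parker_unique hs (hgspec i1) (heq ▸ hgspec i2)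
    omega

end TreePF

open TreePF

/-- For a parking function `(T, s)`, the edge `(u, parent u)` out of
a non-root vertex `u` is used by `s` iff `|T_u| < |{i : s_i ∈ T_u}|`; consequently,
the set of used edges is invariant under permutations of `s`. -/
theorem usedEdge_iff_count {n : ℕ} (root : Fin n) (parent : Fin n → Fin n)
    (hT : IsRootedTree root parent) (s : Fin n → Fin n) (hs : IsTreePF parent s) :
    (∀ u : Fin n, u ≠ root →
      (UsedEdge root parent s u ↔
        (subtree parent u).card <
          (Finset.univ.filter fun i => s i ∈ subtree parent u).card)) ∧
    ∀ (σ : Equiv.Perm (Fin n)) (u : Fin n),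
      UsedEdge root parent (fun i => s (σ i)) u ↔ UsedEdge root parent s u := by
  constructor
  · exact fun u hu => usedEdge_iff hT hs u hu
  · intro σ u
    by_cases hu : u = root
    · subst hu
      constructor <;> (rintro ⟨h, -⟩; exact absurd rfl h)
    · have hperm : (List.ofFn fun i => s (σ i)).Perm (List.ofFn s) :=
        Equiv.Perm.ofFn_comp_perm σ s
      have hfold := hperm.foldl_eq' (fun x _ y _ z => treeStep_comm hT z x y)
      have hs' : IsTreePF parent (fun i => s (σ i)) := by
        unfold IsTreePF occAfter at hs ⊢
        rw [List.take_of_length_le (by simp)] at hs ⊢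
        rw [hfold]
        exact hs
      have hcount : (Finset.univ.filter fun i => s (σ i) ∈ subtree parent u).card =
          (Finset.univ.filter fun i => s i ∈ subtree parent u).card := by
        apply Finset.card_bij' (fun i _ => σ i) (fun j _ => σ.symm j) <;>
          simp [Finset.mem_filter]
      rw [usedEdge_iff hT hs' u hu, usedEdge_iff hT hs u hu, hcount]
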